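/- arXiv:2005.01112 — 5 statements merged into one kernel-verified Lean document; each statement's English description precedes it below -/
import Mathlib

section
/- If i ≤ l ≤ j are positions in a word w and the suffixes w[i:n] and w[j:n] have the same set of subsequences of length at most k, then w[l:n] also has the same set of subsequences of length at most k as w[i:n]. In other words, the equivalence classes of positions under Simon's congruence ∼_k restricted to suffixes form intervals of positions. -/
def SF {α : Type*} (k : ℕ) (w : List α) : Set (List α) :=
  {u | u.Sublist w ∧ u.length ≤ k}

/-- Simon's congruence: same set of subsequences of length at most `k`. -/
def SimEq {α : Type*} (k : ℕ) (u v : List α) : Prop := SF k u = SF k v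

lemma SF_mono {α : Type*} (k : ℕ) {u v : List α} (h : u.Sublist v) :
    SF k u ⊆ SF k v := fun x hx => ⟨hx.1.trans h, hx.2⟩

/-- Equivalence classes of suffix positions under `∼_k` are intervals:
if i ≤ l ≤ j and the suffixes at i and j are k-equivalent, so is the suffix at l. -/
theorem simEq_interval {α : Type*} (w : List α) (k i l j : ℕ)
    (hil : i ≤ l) (hlj : l ≤ j) (hj : j ≤ w.length)
    (h : SimEq k (w.drop i) (w.drop j)) :
    SimEq k (w.drop l) (w.drop i) := by
  have h1 : (w.drop l).Sublist (w.drop i) := by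
    rw [show l = i + (l - i) by omega, ← List.drop_drop]
    exact List.drop_sublist _ _
  have h2 : (w.drop j).Sublist (w.drop l) := by
    rw [show j = l + (j - l) by omega, ← List.drop_drop]
    exact List.drop_sublist _ _
  apply Set.Subset.antisymm (SF_mono k h1)
  rw [h]
  exact SF_mono k h2
end

section
/- Let a = [m_a, n_a] be a k-block of a word w with k > 0 and m_a < n_a (i.e., all positions in [m_a, n_a] are pairwise k-equivalent, and this interval is maximal). Then for every position i with m_a ≤ i ≤ n_a − 1, the positions i and n_a are not (k+1)-equivalent. -/
/-- If `[m_a, n_a]` is a k-block (k > 0) with more than one position, then no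
position strictly inside the block is (k+1)-equivalent to the last position `n_a`.
Positions are 0-indexed; the suffix at position `i` is `w.drop i`. -/
theorem split_last_position {α : Type*} (w : List α) (k ma na : ℕ)
    (hk : 0 < k) (hmn : ma < na) (hna : na < w.length)
    (hblk : ∀ i j, ma ≤ i → i ≤ na → ma ≤ j → j ≤ na →
      SimEq k (w.drop i) (w.drop j))
    (hmax : ¬ SimEq k (w.drop na) (w.drop (na + 1)) ∨ na = w.length - 1) :
    ∀ i, ma ≤ i → i < na → ¬ SimEq (k + 1) (w.drop i) (w.drop na) := by
  intro i _ hin hsim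
  -- decomposition of drop na
  have hdna : w.drop na = w[na] :: w.drop (na + 1) := List.drop_eq_getElem_cons hna
  -- obtain a witness u : sublist of drop na, length ≤ k, not a sublist of drop (na+1)
  obtain ⟨u, hu, huk, hnu⟩ :
      ∃ u : List α, u.Sublist (w.drop na) ∧ u.length ≤ k ∧ ¬ u.Sublist (w.drop (na + 1)) := by
    rcases hmax with hne | hlast
    · by_contra h
      push_neg at h
      apply hne
      ext v
      constructor
      · rintro ⟨hv, hvk⟩
        exact ⟨h v hv hvk, hvk⟩
      · rintro ⟨hv, hvk⟩
        exact ⟨hv.trans (by rw [hdna]; exact List.sublist_cons_self _ _), hvk⟩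
    · refine ⟨[w[na]], ?_, hk, ?_⟩
      · rw [hdna]; exact (List.nil_sublist _).cons₂ _
      · have : w.drop (na + 1) = [] := by
          apply List.drop_eq_nil_of_le
          omega
        rw [this]
        simp
  -- the list w[i] :: u is in SF (k+1) (drop i)
  have hi : i < w.length := lt_trans hin hna
  have hdi : w.drop i = w[i] :: w.drop (i + 1) := List.drop_eq_getElem_cons hi
  have hsub : (w[i] :: u).Sublist (w.drop i) := by
    rw [hdi]
    apply List.Sublist.cons₂
    have : w.drop na = (w.drop (i + 1)).drop (na - (i + 1)) := by
      rw [List.drop_drop]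
      congr 1
      omega
    exact hu.trans (this ▸ List.drop_sublist _ _)
  have hmem : (w[i] :: u) ∈ SF (k + 1) (w.drop i) := ⟨hsub, by simpa using huk⟩
  rw [hsim] at hmem
  obtain ⟨hmem, -⟩ := hmem
  rw [hdna] at hmem
  rcases List.cons_sublist_cons'.mp hmem with h | ⟨-, h⟩
  · exact hnu ((List.sublist_cons_self _ _).trans h)
  · exact hnu h
end

section
/- Let a = [m_a, n_a] be a k-block of a word w with k > 0 and m_a < n_a, and let a† = [m_a, n_a − 1]. Then for positions i, j in a†: i ∼_{k+1} j if and only if the set of letters occurring in w[i : n_a − 1] equals the set of letters occurring in w[j : n_a − 1]. -/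
/-- The set of letters of a word. -/
def alph {α : Type*} (w : List α) : Set α := {x | x ∈ w}

/-- The factor `w[i : l]` (positions `i` through `l` inclusive, 0-indexed). -/
def factor {α : Type*} (w : List α) (i l : ℕ) : List α :=
  (w.drop i).take (l + 1 - i)

/-- Suffix monotonicity of drops. -/
lemma drop_sublist_drop {α : Type*} (w : List α) {a b : ℕ} (h : a ≤ b) :
    (w.drop b).Sublist (w.drop a) := by
  have : w.drop b = (w.drop a).drop (b - a) := by
    rw [List.drop_drop]
    congr 1
    omega
  rw [this]
  exact List.drop_sublist _ _

/-- Decomposition of a cons-sublist of a suffix. -/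
lemma cons_sublist_drop_decomp {α : Type*} {w : List α} {x : α} {u : List α} {i : ℕ}
    (h : (x :: u).Sublist (w.drop i)) :
    ∃ t, i ≤ t ∧ w[t]? = some x ∧ u.Sublist (w.drop (t + 1)) := by
  obtain ⟨r₁, r₂, hsplit, hx, hu⟩ := List.cons_sublist_iff.1 h
  obtain ⟨p, hp, hxp⟩ := List.mem_iff_getElem.1 hx
  refine ⟨i + p, by omega, ?_, ?_⟩
  · have h1 : (w.drop i)[p]? = w[i + p]? := List.getElem?_drop
    rw [hsplit, List.getElem?_append, if_pos hp] at h1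
    rw [← h1, List.getElem?_eq_some_iff]
    exact ⟨hp, hxp⟩
  · have hr2 : r₂ = w.drop (i + r₁.length) := by
      have h2 : List.drop r₁.length (r₁ ++ r₂) = r₂ := List.drop_left
      rw [← hsplit, List.drop_drop] at h2
      exact h2.symm
    have : (w.drop (i + r₁.length)).Sublist (w.drop (i + p + 1)) :=
      drop_sublist_drop w (by omega)
    exact hu.trans (hr2 ▸ this)

/-- Build a cons-sublist from a letter position. -/
lemma cons_sublist_of_getElem {α : Type*} {w : List α} {x : α} {u : List α} {t : ℕ}
    (hx : w[t]? = some x) (hu : u.Sublist (w.drop (t + 1))) :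
    (x :: u).Sublist (w.drop t) := by
  obtain ⟨ht, hxe⟩ := List.getElem?_eq_some_iff.1 hx
  subst hxe
  rw [List.drop_eq_getElem_cons ht]
  exact hu.cons₂ _

/-- Membership in a factor from a letter position. -/
lemma mem_factor_of_getElem {α : Type*} {w : List α} {x : α} {i l t : ℕ}
    (hit : i ≤ t) (htl : t ≤ l) (hx : w[t]? = some x) :
    x ∈ factor w i l := by
  rw [factor, List.mem_iff_getElem?]
  refine ⟨t - i, ?_⟩
  rw [List.getElem?_take, if_pos (by omega), List.getElem?_drop]
  rw [show i + (t - i) = t by omega]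
  exact hx

/-- Extraction of a letter position from factor membership. -/
lemma getElem_of_mem_factor {α : Type*} {w : List α} {x : α} {j l : ℕ}
    (hx : x ∈ factor w j l) :
    ∃ s, j ≤ s ∧ s ≤ l ∧ w[s]? = some x := by
  rw [factor, List.mem_iff_getElem?] at hx
  obtain ⟨p, hp⟩ := hx
  rw [List.getElem?_take] at hp
  by_cases hlt : p < l + 1 - j
  · rw [if_pos hlt, List.getElem?_drop] at hp
    exact ⟨j + p, by omega, by omega, hp⟩
  · rw [if_neg hlt] at hp
    exact absurd hp (by simp)

/-- For a k-block `[m_a, n_a]` (k > 0, m_a < n_a) and positions i, j in the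
truncated block `[m_a, n_a - 1]`: i ∼_{k+1} j iff the sets of letters of
`w[i : n_a - 1]` and `w[j : n_a - 1]` coincide. -/
theorem split_characterization {α : Type*} (w : List α) (k ma na : ℕ)
    (hk : 0 < k) (hmn : ma < na) (hna : na < w.length)
    (hblk : ∀ i j, ma ≤ i → i ≤ na → ma ≤ j → j ≤ na →
      SimEq k (w.drop i) (w.drop j))
    (hmax : ¬ SimEq k (w.drop na) (w.drop (na + 1)) ∨ na = w.length - 1) :
    ∀ i j, ma ≤ i → i ≤ na - 1 → ma ≤ j → j ≤ na - 1 →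
      (SimEq (k + 1) (w.drop i) (w.drop j) ↔
        alph (factor w i (na - 1)) = alph (factor w j (na - 1))) := by
  -- transfer a short word between suffixes within the block
  have H1 : ∀ a b u, ma ≤ a → a ≤ na → ma ≤ b → b ≤ na →
      u.Sublist (w.drop a) → List.length u ≤ k → u.Sublist (w.drop b) := by
    intro a b u ha1 ha2 hb1 hb2 hu hlen
    have h := hblk a b ha1 ha2 hb1 hb2
    have : u ∈ SF k (w.drop b) := h ▸ (⟨hu, hlen⟩ : u ∈ SF k (w.drop a))
    exact this.1
  -- a separating word at the right end of the block
  have H2 : ∃ u : List α, u.Sublist (w.drop na) ∧ u.length ≤ k ∧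
      ¬ u.Sublist (w.drop (na + 1)) := by
    rcases hmax with hne | hend
    · have hsub : SF k (w.drop (na + 1)) ⊆ SF k (w.drop na) := by
        intro u hu
        exact ⟨hu.1.trans (drop_sublist_drop w (by omega)), hu.2⟩
      have hss : SF k (w.drop (na + 1)) ⊂ SF k (w.drop na) :=
        hsub.ssubset_of_ne (fun h => hne h.symm)
      obtain ⟨u, hu1, hu2⟩ := Set.exists_of_ssubset hss
      exact ⟨u, hu1.1, hu1.2, fun h => hu2 ⟨h, hu1.2⟩⟩
    · have hnil : w.drop (na + 1) = [] := List.drop_eq_nil_of_le (by omega)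
      refine ⟨[w[na]], ?_, by simp; omega, ?_⟩
      · rw [List.drop_eq_getElem_cons hna, hnil]
      · rw [hnil]; simp
  have hna1 : na - 1 + 1 - na = 0 := by omega
  -- KEY 1 : k+1 equivalence implies factor alphabet inclusion
  have key1 : ∀ i j, ma ≤ i → i ≤ na - 1 → ma ≤ j → j ≤ na - 1 →
      SimEq (k + 1) (w.drop i) (w.drop j) →
      alph (factor w i (na - 1)) ⊆ alph (factor w j (na - 1)) := by
    intro i j hmi hina hmj hjna heq x hx
    by_contra hxj
    obtain ⟨s, his, hsna, hxs⟩ := getElem_of_mem_factor hx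
    obtain ⟨u, hu1, hu2, hu3⟩ := H2
    have husu : u.Sublist (w.drop (s + 1)) :=
      H1 na (s + 1) u (le_of_lt hmn) le_rfl (by omega) (by omega) hu1 hu2
    have hxu : (x :: u).Sublist (w.drop i) :=
      (cons_sublist_of_getElem hxs husu).trans (drop_sublist_drop w his)
    have hmem : (x :: u) ∈ SF (k + 1) (w.drop i) := ⟨hxu, by simp; omega⟩
    rw [heq] at hmem
    have hsubj : (x :: u).Sublist
        (factor w j (na - 1) ++ w.drop na) := by
      have hdecomp : factor w j (na - 1) ++ w.drop na = w.drop j := by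
        rw [factor, show na - 1 + 1 - j = na - j by omega]
        have : (w.drop j).drop (na - j) = w.drop na := by
          rw [List.drop_drop]; congr 1; omega
        rw [← this, List.take_append_drop]
      rw [hdecomp]
      exact hmem.1
    obtain ⟨l₁, l₂, hsplit, hl₁, hl₂⟩ := List.sublist_append_iff.1 hsubj
    have hxu2 : (x :: u).Sublist (w.drop na) := by
      cases l₁ with
      | nil => rw [hsplit]; simpa using hl₂
      | cons y ys =>
        exfalso
        have hy : y = x := by
          have := hsplit
          simp at this
          exact this.1.symm
        apply hxj
        have : y ∈ factor w j (na - 1) := hl₁.subset (by simp)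
        rw [hy] at this
        exact this
    obtain ⟨t, hnat, _, hut⟩ := cons_sublist_drop_decomp hxu2
    exact hu3 (hut.trans (drop_sublist_drop w (by omega)))
  -- KEY 2 : factor alphabet inclusion implies SF (k+1) inclusion
  have key2 : ∀ i j, ma ≤ i → i ≤ na - 1 → ma ≤ j → j ≤ na - 1 →
      alph (factor w i (na - 1)) ⊆ alph (factor w j (na - 1)) →
      SF (k + 1) (w.drop i) ⊆ SF (k + 1) (w.drop j) := by
    intro i j hmi hina hmj hjna hsub v hv
    obtain ⟨hvsub, hvlen⟩ := hv
    cases v with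
    | nil => exact ⟨List.nil_sublist _, by simp⟩
    | cons x u =>
      obtain ⟨t, hit, hxt, hut⟩ := cons_sublist_drop_decomp hvsub
      have hulen : u.length ≤ k := by simp at hvlen; omega
      by_cases htna : na ≤ t
      · refine ⟨((cons_sublist_of_getElem hxt hut).trans
          (drop_sublist_drop w htna)).trans (drop_sublist_drop w (by omega)), hvlen⟩
      · have hxin : x ∈ factor w i (na - 1) :=
          mem_factor_of_getElem hit (by omega) hxt
        have hxj : x ∈ factor w j (na - 1) := hsub hxin
        obtain ⟨s, hjs, hsna, hxs⟩ := getElem_of_mem_factor hxj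
        have hus : u.Sublist (w.drop (s + 1)) :=
          H1 (t + 1) (s + 1) u (by omega) (by omega) (by omega) (by omega) hut hulen
        exact ⟨(cons_sublist_of_getElem hxs hus).trans (drop_sublist_drop w hjs), hvlen⟩
  intro i j hmi hina hmj hjna
  constructor
  · intro heq
    exact Set.Subset.antisymm (key1 i j hmi hina hmj hjna heq)
      (key1 j i hmj hjna hmi hina heq.symm)
  · intro halph
    exact Set.Subset.antisymm (key2 i j hmi hina hmj hjna halph.le)
      (key2 j i hmj hjna hmi hina halph.ge)
end

section
/- Let s and t be words with s[i:|s|] ∼_k t[j:|t|] for some k ≥ 1 (the suffixes have the same subsequences of length at most k). Then s[i:|s|] and t[j:|t|] are NOT (k+1)-equivalent if and only if there exists a letter x such that s[p+1:|s|] and t[q+1:|t|] are not k-equivalent, where p is the leftmost position ≥ i with s[p] = x and q is the leftmost position ≥ j with t[q] = x (with the convention that if x occurs in exactly one of the two suffixes, then the suffixes are not (k+1)-equivalent). -/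
/-- `p` is the leftmost position `≥ i` of letter `x` in `w` (0-indexed). -/
def IsNextpos {α : Type*} (w : List α) (i p : ℕ) (x : α) : Prop :=
  i ≤ p ∧ w[p]? = some x ∧ ∀ r, i ≤ r → r < p → w[r]? ≠ some x

/-- First occurrence of `x` in `w` is at `m`. -/
def FirstOcc {α : Type*} (w : List α) (m : ℕ) (x : α) : Prop :=
  w[m]? = some x ∧ ∀ r < m, w[r]? ≠ some x

lemma mem_of_simeq {α : Type*} {k : ℕ} (hk : 1 ≤ k) {u v : List α}
    (h : SimEq k u v) {x : α} (hx : x ∈ u) : x ∈ v := by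
  have h1 : [x] ∈ SF k u := ⟨List.singleton_sublist.2 hx, by simpa using hk⟩
  rw [h] at h1
  exact List.singleton_sublist.1 h1.1

lemma exists_firstOcc {α : Type*} {u : List α} {x : α} (hx : x ∈ u) :
    ∃ m, FirstOcc u m x := by
  classical
  have he : ∃ m : ℕ, u[m]? = some x := by
    obtain ⟨n, hn, hnx⟩ := List.getElem_of_mem hx
    exact ⟨n, by simp [hn, hnx]⟩
  exact ⟨Nat.find he, Nat.find_spec he, fun r hr => Nat.find_min he hr⟩

lemma sublist_drop_of_cons_sublist {α : Type*} :
    ∀ (v w : List α) (x : α) (n : ℕ),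
      v[n]? = some x → (∀ r < n, v[r]? ≠ some x) → (x :: w).Sublist v →
      w.Sublist (v.drop (n + 1))
  | [], w, x, n, h, _, _ => by simp at h
  | a :: v', w, x, 0, h, _, hs => by
      simp only [List.getElem?_cons_zero, Option.some.injEq] at h
      subst h
      cases hs with
      | cons _ hs => exact (List.sublist_cons_self a w).trans hs
      | cons_cons _ hs => simpa using hs
  | a :: v', w, x, (n + 1), h, hmin, hs => by
      have ha : a ≠ x := by
        have h0 := hmin 0 (Nat.succ_pos n)
        simpa using h0
      cases hs with
      | cons _ hs =>
          have ih := sublist_drop_of_cons_sublist v' w x n (by simpa using h)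
            (fun r hr => by have := hmin (r + 1) (by omega); simpa using this) hs
          simpa using ih
      | cons_cons _ hs => exact absurd rfl ha

lemma cons_sublist_of_drop {α : Type*} {v w : List α} {x : α} {n : ℕ}
    (h : v[n]? = some x) (hw : w.Sublist (v.drop (n + 1))) :
    (x :: w).Sublist v := by
  obtain ⟨hn, hvx⟩ := List.getElem?_eq_some_iff.1 h
  have hdrop : v.drop n = x :: v.drop (n + 1) := by
    rw [List.drop_eq_getElem_cons hn, hvx]
  have h1 : (x :: w).Sublist (v.drop n) := by
    rw [hdrop]; exact hw.cons₂ x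
  exact h1.trans (List.drop_sublist n v)

lemma ne_simeq_witness {α : Type*} {k : ℕ} {a b : List α} (h : ¬ SimEq k a b) :
    ∃ w, (w ∈ SF k a ∧ w ∉ SF k b) ∨ (w ∈ SF k b ∧ w ∉ SF k a) := by
  by_contra hc
  push_neg at hc
  apply h
  ext w
  have := hc w
  tauto

lemma core_backward {α : Type*} {k : ℕ} {u v : List α} {x : α} {m n : ℕ}
    (hm : FirstOcc u m x) (hn : FirstOcc v n x)
    (hne : ¬ SimEq k (u.drop (m + 1)) (v.drop (n + 1))) : ¬ SimEq (k + 1) u v := by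
  obtain ⟨w, hcase⟩ := ne_simeq_witness hne
  intro hsim
  rcases hcase with ⟨⟨hwu, hwl⟩, hwv⟩ | ⟨⟨hwv, hwl⟩, hwu⟩
  · have h1 : (x :: w) ∈ SF (k + 1) u :=
      ⟨cons_sublist_of_drop hm.1 hwu, by simp; omega⟩
    rw [hsim] at h1
    exact hwv ⟨sublist_drop_of_cons_sublist v w x n hn.1 hn.2 h1.1, hwl⟩
  · have h1 : (x :: w) ∈ SF (k + 1) v :=
      ⟨cons_sublist_of_drop hn.1 hwv, by simp; omega⟩
    rw [← hsim] at h1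
    exact hwu ⟨sublist_drop_of_cons_sublist u w x m hm.1 hm.2 h1.1, hwl⟩

lemma core_forward_aux {α : Type*} {k : ℕ} (hk : 1 ≤ k) {u v : List α}
    (h : SimEq k u v) {w : List α} (hw : w.Sublist u) (hlen : w.length ≤ k + 1)
    (hnv : ¬ w.Sublist v) :
    ∃ x m n, FirstOcc u m x ∧ FirstOcc v n x ∧
      ¬ SimEq k (u.drop (m + 1)) (v.drop (n + 1)) := by
  have hlen' : w.length = k + 1 := by
    by_contra hc
    have : w ∈ SF k u := ⟨hw, by omega⟩
    rw [h] at this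
    exact hnv this.1
  obtain ⟨x, w', rfl⟩ : ∃ x w', w = x :: w' := by
    cases w with
    | nil => simp at hlen'
    | cons a l => exact ⟨a, l, rfl⟩
  have hxu : x ∈ u := hw.subset List.mem_cons_self
  have hxv : x ∈ v := mem_of_simeq hk h hxu
  obtain ⟨m, hm⟩ := exists_firstOcc hxu
  obtain ⟨n, hn⟩ := exists_firstOcc hxv
  refine ⟨x, m, n, hm, hn, ?_⟩
  intro hsim
  have hw' : w' ∈ SF k (u.drop (m + 1)) :=
    ⟨sublist_drop_of_cons_sublist u w' x m hm.1 hm.2 hw, by simp at hlen'; omega⟩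
  rw [hsim] at hw'
  exact hnv (cons_sublist_of_drop hn.1 hw'.1)

lemma simeq_symm {α : Type*} {k : ℕ} {u v : List α} (h : SimEq k u v) : SimEq k v u :=
  h.symm

lemma core_forward {α : Type*} {k : ℕ} (hk : 1 ≤ k) {u v : List α}
    (h : SimEq k u v) (hne : ¬ SimEq (k + 1) u v) :
    ∃ x m n, FirstOcc u m x ∧ FirstOcc v n x ∧
      ¬ SimEq k (u.drop (m + 1)) (v.drop (n + 1)) := by
  obtain ⟨w, hcase⟩ := ne_simeq_witness hne
  rcases hcase with ⟨⟨hwu, hwl⟩, hwv⟩ | ⟨⟨hwv, hwl⟩, hwu⟩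
  · exact core_forward_aux hk h hwu hwl (fun hc => hwv ⟨hc, hwl⟩)
  · obtain ⟨x, n, m, hn, hm, hd⟩ :=
      core_forward_aux hk (simeq_symm h) hwv hwl (fun hc => hwu ⟨hc, hwl⟩)
    exact ⟨x, m, n, hm, hn, fun hc => hd (simeq_symm hc)⟩

lemma firstOcc_drop_iff {α : Type*} {s : List α} {i m : ℕ} {x : α} :
    FirstOcc (s.drop i) m x ↔ IsNextpos s i (i + m) x := by
  constructor
  · rintro ⟨h1, h2⟩
    refine ⟨Nat.le_add_right i m, by rw [← List.getElem?_drop]; exact h1, ?_⟩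
    intro r hir hr
    have h3 := h2 (r - i) (by omega)
    rw [List.getElem?_drop] at h3
    have : i + (r - i) = r := by omega
    rwa [this] at h3
  · rintro ⟨_, h1, h2⟩
    refine ⟨by rw [List.getElem?_drop]; exact h1, ?_⟩
    intro r hr
    rw [List.getElem?_drop]
    exact h2 (i + r) (Nat.le_add_right i r) (by omega)

lemma drop_drop' {α : Type*} (s : List α) (i m : ℕ) :
    (s.drop i).drop (m + 1) = s.drop (i + m + 1) := by
  rw [List.drop_drop, Nat.add_assoc]

/-- Two k-equivalent suffixes fail to be (k+1)-equivalent iff there is a letter x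
such that the suffixes just after the next occurrences of x are not k-equivalent;
by convention, if x occurs in exactly one of the suffixes, they are not
(k+1)-equivalent. -/
theorem block_equivalence_criterion {α : Type*} (k : ℕ) (hk : 1 ≤ k)
    (s t : List α) (i j : ℕ)
    (h : SimEq k (s.drop i) (t.drop j)) :
    ¬ SimEq (k + 1) (s.drop i) (t.drop j) ↔
      ∃ x : α,
        ((x ∈ s.drop i ∧ x ∉ t.drop j) ∨ (x ∉ s.drop i ∧ x ∈ t.drop j)) ∨
        ∃ p q, IsNextpos s i p x ∧ IsNextpos t j q x ∧
          ¬ SimEq k (s.drop (p + 1)) (t.drop (q + 1)) := by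
  constructor
  · intro hne
    obtain ⟨x, m, n, hm, hn, hd⟩ := core_forward hk h hne
    refine ⟨x, Or.inr ⟨i + m, j + n, firstOcc_drop_iff.1 hm, firstOcc_drop_iff.1 hn, ?_⟩⟩
    rw [← drop_drop' s i m, ← drop_drop' t j n]; exact hd
  · rintro ⟨x, (⟨hx1, hx2⟩ | ⟨hx1, hx2⟩) | ⟨p, q, hp, hq, hd⟩⟩
    · exact (hx2 (mem_of_simeq hk h hx1)).elim
    · exact (hx1 (mem_of_simeq hk (simeq_symm h) hx2)).elim
    · have hip : i ≤ p := hp.1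
      have hjq : j ≤ q := hq.1
      have hpi : p = i + (p - i) := by omega
      have hqj : q = j + (q - j) := by omega
      have hm : FirstOcc (s.drop i) (p - i) x := firstOcc_drop_iff.2 (hpi ▸ hp)
      have hn : FirstOcc (t.drop j) (q - j) x := firstOcc_drop_iff.2 (hqj ▸ hq)
      refine core_backward hm hn ?_
      rw [drop_drop', drop_drop']
      have e1 : i + (p - i) + 1 = p + 1 := by omega
      have e2 : j + (q - j) + 1 = q + 1 := by omega
      rw [e1, e2]
      exact hd
end

section
/- Let k ≥ 1, let a' be a (k+1)-block in word s ending at position n_{a'}, b' a (k+1)-block in word t ending at n_{b'}, whose parent k-blocks a and b satisfy a ∼_k b and a' ∼_{k+1} b' with a' the i-th child of a and b' the i-th child of b for some i > 1. Then alph(s[n_{a'} : n_a − 1]) = alph(t[n_{b'} : n_b − 1]). -/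
/-- `[m, n]` is a k-block of `w`: a maximal interval of pairwise k-equivalent
positions. -/
def IsBlock {α : Type*} (k : ℕ) (w : List α) (m n : ℕ) : Prop :=
  m ≤ n ∧ n < w.length ∧
  (∀ i j, m ≤ i → i ≤ n → m ≤ j → j ≤ n → SimEq k (w.drop i) (w.drop j)) ∧
  (m = 0 ∨ ¬ SimEq k (w.drop (m - 1)) (w.drop m)) ∧
  (n = w.length - 1 ∨ ¬ SimEq k (w.drop n) (w.drop (n + 1)))

/-- Block-to-block k-equivalence across two words: every suffix starting in the
first block is k-equivalent to every suffix starting in the second. -/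
def BlocksEq {α : Type*} (k : ℕ) (s t : List α) (ma na mb nb : ℕ) : Prop :=
  ∀ i j, ma ≤ i → i ≤ na → mb ≤ j → j ≤ nb → SimEq k (s.drop i) (t.drop j)

lemma pcon_cons_sublist_of_not_mem {α : Type*} {x : α} {u d : List α} :
    ∀ {g : List α}, (x :: u).Sublist (g ++ d) → x ∉ g → (x :: u).Sublist d := by
  intro g
  induction g with
  | nil => intro h _; simp at h; exact h
  | cons y g ih =>
    intro h hx
    cases h with
    | cons _ h => exact ih h (fun hm => hx (List.mem_cons_of_mem _ hm))
    | cons_cons _ h => exact absurd List.mem_cons_self hx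

lemma pcon_sublist_tail {α : Type*} {a b : α} {l l' : List α}
    (h : (a :: l).Sublist (b :: l')) : l.Sublist l' := by
  cases h with
  | cons _ h => exact (List.sublist_cons_self a l).trans h
  | cons_cons _ h => exact h

/-- One inclusion direction. -/
lemma pcon_child_alph_subset {α : Type*} (k : ℕ) (hk : 1 ≤ k)
    (s t : List α) (ma na mb nb ma' na' mb' nb' : ℕ)
    (hb : IsBlock k t mb nb)
    (hab : BlocksEq k s t ma na mb nb)
    (hma' : ma ≤ ma') (hmana' : ma' ≤ na')
    (hb'1 : mb' ≤ nb')
    (hab' : BlocksEq (k + 1) s t ma' na' mb' nb')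
    (hna : na' < na) (hnb : nb' < nb) :
    alph (factor s na' (na - 1)) ⊆ alph (factor t nb' (nb - 1)) := by
  intro x hx
  by_contra hxB
  obtain ⟨hmbnb, hnbl, _hbeq, _, hbr⟩ := hb
  -- decomposition of s.drop na'
  have hfa : factor s na' (na - 1) = (s.drop na').take (na - na') := by
    unfold factor; congr 1; omega
  have hdd : (s.drop na').drop (na - na') = s.drop na := by
    rw [List.drop_drop]
    congr 1; omega
  have hsplit : s.drop na' = (s.drop na').take (na - na') ++ s.drop na := by
    conv_lhs => rw [← List.take_append_drop (na - na') (s.drop na')]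
    rw [hdd]
  rw [hfa] at hx
  have hx' : x ∈ (s.drop na').take (na - na') := hx
  obtain ⟨f₁, f₂, hf⟩ := List.append_of_mem hx'
  have hlenF : ((s.drop na').take (na - na')).length ≤ na - na' := by
    simp
  have hlenf₁ : f₁.length + 1 ≤ na - na' := by
    rw [hf] at hlenF; simp at hlenF; omega
  -- the suffix after position p = na' + f₁.length
  have hsplit2 : s.drop na' = f₁ ++ x :: (f₂ ++ s.drop na) := by
    rw [hsplit, hf]; simp
  have hdropp : s.drop (na' + (f₁.length + 1)) = f₂ ++ s.drop na := by
    have h1 : s.drop (na' + (f₁.length + 1)) = (s.drop na').drop (f₁.length + 1) := by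
      rw [List.drop_drop]
    rw [h1, hsplit2]
    have h2 : f₁ ++ x :: (f₂ ++ s.drop na) = (f₁ ++ [x]) ++ (f₂ ++ s.drop na) := by simp
    rw [h2]
    exact List.drop_left' (by simp)
  -- obtain the witness w
  have hW : ∃ w : List α, w.Sublist (t.drop nb) ∧ w.length ≤ k ∧
      ¬ w.Sublist (t.drop (nb + 1)) := by
    rcases hbr with hlast | hne
    · refine ⟨[t[nb]'hnbl], ?_, hk, ?_⟩
      · rw [List.drop_eq_getElem_cons hnbl]
        exact (List.nil_sublist _).cons₂ _
      · have : t.drop (nb + 1) = [] := by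
          apply List.drop_eq_nil_of_le; omega
        rw [this]
        simp
    · have hsub : SF k (t.drop (nb + 1)) ⊆ SF k (t.drop nb) := by
        intro u hu
        refine ⟨hu.1.trans ?_, hu.2⟩
        have : t.drop (nb + 1) = (t.drop nb).drop 1 := by
          rw [List.drop_drop]
        rw [this]
        exact List.drop_sublist _ _
      have hss : SF k (t.drop (nb + 1)) ⊂ SF k (t.drop nb) :=
        hsub.ssubset_of_ne (fun h => hne h.symm)
      obtain ⟨w, hw1, hw2⟩ := Set.exists_of_ssubset hss
      exact ⟨w, hw1.1, hw1.2, fun hc => hw2 ⟨hc, hw1.2⟩⟩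
  obtain ⟨w, hw1, hw2, hw3⟩ := hW
  -- transport w into s at position na' + f₁.length + 1
  have hS : SF k (s.drop (na' + (f₁.length + 1))) = SF k (t.drop nb) :=
    hab (na' + (f₁.length + 1)) nb (by omega) (by omega) hmbnb le_rfl
  have hwS : w ∈ SF k (s.drop (na' + (f₁.length + 1))) := by
    rw [hS]; exact ⟨hw1, hw2⟩
  have hwsub : w.Sublist (f₂ ++ s.drop na) := by
    rw [← hdropp]; exact hwS.1
  -- x :: w is a (k+1)-subsequence of s.drop na'
  have hxw : (x :: w) ∈ SF (k + 1) (s.drop na') := by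
    constructor
    · rw [hsplit2]
      exact List.Sublist.trans (hwsub.cons₂ x) (List.sublist_append_right f₁ _)
    · simp; omega
  have hT : SF (k + 1) (s.drop na') = SF (k + 1) (t.drop nb') :=
    hab' na' nb' hmana' le_rfl hb'1 le_rfl
  rw [hT] at hxw
  -- decomposition of t.drop nb'
  have hga : factor t nb' (nb - 1) = (t.drop nb').take (nb - nb') := by
    unfold factor; congr 1; omega
  have hgdd : (t.drop nb').drop (nb - nb') = t.drop nb := by
    rw [List.drop_drop]; congr 1; omega
  have hgsplit : t.drop nb' = (t.drop nb').take (nb - nb') ++ t.drop nb := by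
    conv_lhs => rw [← List.take_append_drop (nb - nb') (t.drop nb')]
    rw [hgdd]
  have hxnotg : x ∉ (t.drop nb').take (nb - nb') := by
    intro hmem
    exact hxB (by rw [hga]; exact hmem)
  have hxwnb : (x :: w).Sublist (t.drop nb) := by
    apply pcon_cons_sublist_of_not_mem (g := (t.drop nb').take (nb - nb'))
    · rw [← hgsplit]; exact hxw.1
    · exact hxnotg
  rw [List.drop_eq_getElem_cons hnbl] at hxwnb
  exact hw3 (pcon_sublist_tail hxwnb)

/-- If the k-blocks a (in s) and b (in t) satisfy a ∼_k b, the (k+1)-blocks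
a' ⊆ a and b' ⊆ b satisfy a' ∼_{k+1} b', and a', b' are the i-th children of a, b
for some i > 1 (i.e., they are not the rightmost children: n_{a'} < n_a and
n_{b'} < n_b), then alph(s[n_{a'} : n_a − 1]) = alph(t[n_{b'} : n_b − 1]). -/
theorem pcon_child_alph {α : Type*} (k : ℕ) (hk : 1 ≤ k)
    (s t : List α) (ma na mb nb ma' na' mb' nb' : ℕ)
    (ha : IsBlock k s ma na) (hb : IsBlock k t mb nb)
    (hab : BlocksEq k s t ma na mb nb)
    (ha' : IsBlock (k + 1) s ma' na') (ha'sub : ma ≤ ma' ∧ na' ≤ na)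
    (hb' : IsBlock (k + 1) t mb' nb') (hb'sub : mb ≤ mb' ∧ nb' ≤ nb)
    (hab' : BlocksEq (k + 1) s t ma' na' mb' nb')
    (hnotright : na' < na ∧ nb' < nb) :
    alph (factor s na' (na - 1)) = alph (factor t nb' (nb - 1)) := by
  have hba : BlocksEq k t s mb nb ma na := fun i j h1 h2 h3 h4 =>
    (hab j i h3 h4 h1 h2).symm
  have hba' : BlocksEq (k + 1) t s mb' nb' ma' na' := fun i j h1 h2 h3 h4 =>
    (hab' j i h3 h4 h1 h2).symm
  apply Set.Subset.antisymm
  · exact pcon_child_alph_subset k hk s t ma na mb nb ma' na' mb' nb'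
      hb hab ha'sub.1 ha'.1 hb'.1 hab' hnotright.1 hnotright.2
  · exact pcon_child_alph_subset k hk t s mb nb ma na mb' nb' ma' na'
      ha hba hb'sub.1 hb'.1 ha'.1 hba' hnotright.2 hnotright.1
end
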